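/- Suppose |a|_p < α < β for f(x)=(ax²+bx)/(x²+dx+b) on ℂ_p. If α < |x|_p < β, then |f(x)|_p = α. If β < |x|_p < αβ/|a|_p then |f(x)|_p = αβ/|x|_p, and if |x|_p > αβ/|a|_p then |f(x)|_p = |a|_p. -/

import Mathlib

open IsUltrametricDist in
lemma add_norm_lt {K : Type*} [NormedAddCommGroup K] [IsUltrametricDist K]
    {u v : K} (h : ‖u‖ < ‖v‖) : ‖u + v‖ = ‖v‖ := by
  rw [norm_add_eq_max_of_norm_ne_norm h.ne, max_eq_right h.le]

/-- Case `|a| < α < β`: if `α < |x| < β` then `|f(x)| = α`; if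
`β < |x| < αβ/|a|` then `|f(x)| = αβ/|x|`; if `|x| > αβ/|a|` then
`|f(x)| = |a|`. -/
theorem stmt13 {K : Type*} [NontriviallyNormedField K] [IsAlgClosed K]
    [IsUltrametricDist K] (a b d z₁ z₂ : K) (hab : a*b ≠ 0) (had : a ≠ d)
    (hsum : z₁ + z₂ = -d) (hprod : z₁ * z₂ = b)
    (ha : ‖a‖ < ‖z₁‖) (hαβ : ‖z₁‖ < ‖z₂‖) :
    ∀ x : K,
      (‖z₁‖ < ‖x‖ → ‖x‖ < ‖z₂‖ →
        ‖(a*x^2 + b*x)/(x^2 + d*x + b)‖ = ‖z₁‖) ∧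
      (‖z₂‖ < ‖x‖ → ‖x‖ < ‖z₁‖*‖z₂‖/‖a‖ →
        ‖(a*x^2 + b*x)/(x^2 + d*x + b)‖ = ‖z₁‖*‖z₂‖/‖x‖) ∧
      (‖z₁‖*‖z₂‖/‖a‖ < ‖x‖ →
        ‖(a*x^2 + b*x)/(x^2 + d*x + b)‖ = ‖a‖) := by
  have ha0 : a ≠ 0 := fun h => hab (by simp [h])
  have hna : (0:ℝ) < ‖a‖ := norm_pos_iff.mpr ha0
  intro x
  have hfac : x^2 + d*x + b = (x - z₁) * (x - z₂) := by
    have : d = -(z₁ + z₂) := by rw [hsum, neg_neg]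
    rw [this, ← hprod]; ring
  have hnum : a*x^2 + b*x = x * (a*x + b) := by ring
  -- helper: norms of the pieces under assumptions
  have hb : ‖b‖ = ‖z₁‖ * ‖z₂‖ := by rw [← hprod, norm_mul]
  refine ⟨?_, ?_, ?_⟩
  · intro h1 h2
    have hx1 : ‖x - z₁‖ = ‖x‖ := by
      have : ‖-z₁‖ < ‖x‖ := by simpa using h1
      simpa [sub_eq_add_neg, add_comm] using add_norm_lt this
    have hx2 : ‖x - z₂‖ = ‖z₂‖ := by
      have : ‖x‖ < ‖-z₂‖ := by simpa using h2
      simpa [sub_eq_add_neg] using add_norm_lt this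
    have hax : ‖a*x + b‖ = ‖b‖ := by
      refine add_norm_lt ?_
      rw [norm_mul, hb]
      exact mul_lt_mul'' ha h2 (norm_nonneg _) (norm_nonneg _)
    rw [hnum, hfac, norm_div, norm_mul, norm_mul, hax, hb, hx1, hx2]
    have hx0 : ‖x‖ ≠ 0 := (lt_trans (lt_trans hna ha) h1).ne'
    have hz2 : ‖z₂‖ ≠ 0 := (lt_trans (lt_trans hna ha) hαβ).ne'
    field_simp
  · intro h1 h2
    have hz1x : ‖z₁‖ < ‖x‖ := lt_trans hαβ h1
    have hx1 : ‖x - z₁‖ = ‖x‖ := by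
      have : ‖-z₁‖ < ‖x‖ := by simpa using hz1x
      simpa [sub_eq_add_neg, add_comm] using add_norm_lt this
    have hx2 : ‖x - z₂‖ = ‖x‖ := by
      have : ‖-z₂‖ < ‖x‖ := by simpa using h1
      simpa [sub_eq_add_neg, add_comm] using add_norm_lt this
    have hax : ‖a*x + b‖ = ‖b‖ := by
      refine add_norm_lt ?_
      rw [norm_mul, hb]
      calc ‖a‖ * ‖x‖ < ‖a‖ * (‖z₁‖*‖z₂‖/‖a‖) := by
            exact (mul_lt_mul_iff_right₀ hna).mpr h2
        _ = ‖z₁‖ * ‖z₂‖ := by field_simp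
    rw [hnum, hfac, norm_div, norm_mul, norm_mul, hax, hb, hx1, hx2]
    have hx0 : ‖x‖ ≠ 0 := (lt_trans (lt_trans hna ha) hz1x).ne'
    field_simp
  · intro h1
    have hβlt : ‖z₂‖ < ‖z₁‖*‖z₂‖/‖a‖ := by
      rw [lt_div_iff₀ hna, mul_comm ‖z₂‖ ‖a‖]
      exact (mul_lt_mul_iff_left₀ (lt_trans hna (lt_trans ha hαβ))).mpr ha
    have h2 : ‖z₂‖ < ‖x‖ := lt_trans hβlt h1
    have hz1x : ‖z₁‖ < ‖x‖ := lt_trans hαβ h2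
    have hx1 : ‖x - z₁‖ = ‖x‖ := by
      have : ‖-z₁‖ < ‖x‖ := by simpa using hz1x
      simpa [sub_eq_add_neg, add_comm] using add_norm_lt this
    have hx2 : ‖x - z₂‖ = ‖x‖ := by
      have : ‖-z₂‖ < ‖x‖ := by simpa using h2
      simpa [sub_eq_add_neg, add_comm] using add_norm_lt this
    have hax : ‖b + a*x‖ = ‖a*x‖ := by
      refine add_norm_lt ?_
      rw [norm_mul, hb]
      rw [div_lt_iff₀ hna] at h1
      linarith
    rw [show a*x^2 + b*x = x * (b + a*x) by ring, hfac, norm_div, norm_mul,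
      norm_mul, hax, norm_mul, hx1, hx2]
    have hx0 : ‖x‖ ≠ 0 := (lt_trans (lt_trans hna ha) hz1x).ne'
    field_simp
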